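/- Let Φ: ℝᵖ → ℝ be twice continuously differentiable and suppose there exists ε ≥ 0 such that all eigenvalues of ∇²Φ(w) lie in [−ε, Λ] for every w in a convex set C, where Λ ≥ ε > 0. Then for all u, v ∈ C: (∇Φ(u) − ∇Φ(v))ᵀ(u − v) ≥ (1/(2Λ))‖∇Φ(u) − ∇Φ(v)‖₂² − 2ε‖u − v‖₂². -/

import Mathlib

open scoped RealInnerProductSpace
open MeasureTheory

/-- Cauchy–Schwarz-type co-coercivity for a symmetric positive semidefinite operator whose
quadratic form is bounded by `L`. -/
lemma pointwise_cocoercive {E : Type*} [NormedAddCommGroup E] [InnerProductSpace ℝ E]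
    (M : E →L[ℝ] E) (L : ℝ) (hL : 0 ≤ L)
    (hsym : ∀ x y : E, ⟪M x, y⟫ = ⟪M y, x⟫)
    (hpos : ∀ x : E, 0 ≤ ⟪M x, x⟫) (hub : ∀ x : E, ⟪M x, x⟫ ≤ L * ‖x‖ ^ 2)
    (d : E) : ‖M d‖ ^ 2 ≤ L * ⟪M d, d⟫ := by
  set y := M d with hy
  have hq : ∀ t : ℝ, 0 ≤ ⟪M y, y⟫ * (t * t) + (2 * ⟪M d, y⟫) * t + ⟪M d, d⟫ := by
    intro t
    have h := hpos (d + t • y)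
    have hexp : ⟪M (d + t • y), d + t • y⟫ =
        ⟪M y, y⟫ * (t * t) + (2 * ⟪M d, y⟫) * t + ⟪M d, d⟫ := by
      rw [M.map_add, M.map_smul]
      simp only [inner_add_left, inner_add_right, real_inner_smul_left, real_inner_smul_right]
      linear_combination t * hsym y d
    linarith [hexp ▸ h]
  have hdisc := discrim_le_zero (a := ⟪M y, y⟫) (b := 2 * ⟪M d, y⟫) (c := ⟪M d, d⟫) hq
  rw [discrim] at hdisc
  have hCS : ⟪M d, y⟫ ^ 2 ≤ ⟪M y, y⟫ * ⟪M d, d⟫ := by nlinarith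
  have hMdy : ⟪M d, y⟫ = ‖y‖ ^ 2 := by
    rw [hy, real_inner_self_eq_norm_sq]
  have hMyy : ⟪M y, y⟫ ≤ L * ‖y‖ ^ 2 := hub y
  have h4 : (‖y‖ ^ 2) ^ 2 ≤ L * ‖y‖ ^ 2 * ⟪M d, d⟫ := by
    calc (‖y‖ ^ 2) ^ 2 = ⟪M d, y⟫ ^ 2 := by rw [hMdy]
      _ ≤ ⟪M y, y⟫ * ⟪M d, d⟫ := hCS
      _ ≤ L * ‖y‖ ^ 2 * ⟪M d, d⟫ := by
          have := hpos d
          nlinarith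
  rcases eq_or_lt_of_le (norm_nonneg y) with h0 | h0
  · rw [← h0]
    have := hpos d
    nlinarith
  · have hy2 : 0 < ‖y‖ ^ 2 := by positivity
    have : ‖y‖ ^ 2 * ‖y‖ ^ 2 ≤ (L * ⟪M d, d⟫) * ‖y‖ ^ 2 := by nlinarith
    exact le_of_mul_le_mul_right this hy2

/-- Jensen's inequality for the square on `[0,1]`. -/
lemma sq_integral_le {g : ℝ → ℝ} (hg : Continuous g) :
    (∫ t in (0:ℝ)..1, g t) ^ 2 ≤ ∫ t in (0:ℝ)..1, (g t) ^ 2 := by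
  set c := ∫ t in (0:ℝ)..1, g t with hc
  have hint1 : IntervalIntegrable g volume 0 1 := hg.intervalIntegrable _ _
  have hint2 : IntervalIntegrable (fun t => (g t) ^ 2) volume 0 1 :=
    (hg.pow 2).intervalIntegrable _ _
  have h0 : (0:ℝ) ≤ ∫ t in (0:ℝ)..1, (g t - c) ^ 2 :=
    intervalIntegral.integral_nonneg (by norm_num) (fun t _ => sq_nonneg _)
  have hexp : ∫ t in (0:ℝ)..1, (g t - c) ^ 2 =
      (∫ t in (0:ℝ)..1, (g t) ^ 2) - 2 * c * c + c ^ 2 := by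
    have heq : (fun t => (g t - c) ^ 2) = fun t => (g t) ^ 2 - (2 * c) * g t + c ^ 2 := by
      funext t; ring
    rw [heq, intervalIntegral.integral_add (hint2.sub (hint1.const_mul _))
      intervalIntegrable_const, intervalIntegral.integral_sub hint2 (hint1.const_mul _),
      intervalIntegral.integral_const_mul, intervalIntegral.integral_const, ← hc]
    simp only [smul_eq_mul, sub_zero, one_mul]
    try ring
  nlinarith [hexp ▸ h0]

set_option maxHeartbeats 1000000 in
/-- Approximate co-coercivity: if the Hessian eigenvalues of `Φ` lie in `[-ε, Λ]` on a convex
set `C`, then `⟪∇Φ(u) - ∇Φ(v), u - v⟫ ≥ (1/(2Λ))‖∇Φ(u)-∇Φ(v)‖² - 2ε‖u-v‖²`. -/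
theorem approximate_cocoercivity {p : ℕ}
    (Φ : EuclideanSpace ℝ (Fin p) → ℝ) (hΦ : ContDiff ℝ 2 Φ)
    (C : Set (EuclideanSpace ℝ (Fin p))) (hC : Convex ℝ C)
    (ε Λ : ℝ) (hε : 0 < ε) (hΛ : ε ≤ Λ)
    (hHess : ∀ w ∈ C, ∀ v : EuclideanSpace ℝ (Fin p),
      -ε * ‖v‖ ^ 2 ≤ ⟪fderiv ℝ (gradient Φ) w v, v⟫ ∧
        ⟪fderiv ℝ (gradient Φ) w v, v⟫ ≤ Λ * ‖v‖ ^ 2) :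
    ∀ u ∈ C, ∀ v ∈ C,
      ⟪gradient Φ u - gradient Φ v, u - v⟫ ≥
        (1 / (2 * Λ)) * ‖gradient Φ u - gradient Φ v‖ ^ 2 - 2 * ε * ‖u - v‖ ^ 2 := by
  intro u hu v hv
  set e := (InnerProductSpace.toDual ℝ (EuclideanSpace ℝ (Fin p))).symm.toContinuousLinearEquiv
    with he
  have h1 : gradient Φ = e ∘ fderiv ℝ Φ := rfl
  have hfd : ContDiff ℝ 1 (fderiv ℝ Φ) := hΦ.fderiv_right (by norm_num)
  have hF1 : ContDiff ℝ 1 (gradient Φ) := by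
    rw [h1]; exact e.toContinuousLinearMap.contDiff.comp hfd
  have hFd : Differentiable ℝ (gradient Φ) := hF1.differentiable one_ne_zero
  have hcontH : Continuous (fderiv ℝ (gradient Φ)) := hF1.continuous_fderiv one_ne_zero
  have hsymH : ∀ w x y : EuclideanSpace ℝ (Fin p),
      ⟪fderiv ℝ (gradient Φ) w x, y⟫ = ⟪fderiv ℝ (gradient Φ) w y, x⟫ := by
    intro w x y
    have hsymm := (hΦ.contDiffAt (x := w)).isSymmSndFDerivAt (by simp)
    have h2 : fderiv ℝ (gradient Φ) w =
        e.toContinuousLinearMap.comp (fderiv ℝ (fderiv ℝ Φ) w) := by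
      rw [h1, ContinuousLinearEquiv.comp_fderiv]
    rw [h2]
    simp only [ContinuousLinearMap.comp_apply, ContinuousLinearEquiv.coe_coe, he,
      LinearIsometryEquiv.coe_toContinuousLinearEquiv, InnerProductSpace.toDual_symm_apply]
    exact hsymm.eq x y
  set d := u - v with hd
  set γ : ℝ → EuclideanSpace ℝ (Fin p) := fun t => v + t • d with hγ
  have hγcont : Continuous γ := by fun_prop
  have hγC : ∀ t ∈ Set.Icc (0:ℝ) 1, γ t ∈ C := by
    intro t ht
    have hcomb : γ t = (1 - t) • v + t • u := by
      simp only [hγ]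
      rw [hd]
      rw [smul_sub, sub_smul, one_smul]
      abel
    rw [hcomb]
    exact hC hv hu (by linarith [ht.2]) ht.1 (by ring)
  set w : ℝ → EuclideanSpace ℝ (Fin p) :=
    fun t => fderiv ℝ (gradient Φ) (γ t) d + ε • d with hw
  have hwc1 : Continuous (fun t => fderiv ℝ (gradient Φ) (γ t) d) :=
    (hcontH.comp hγcont).clm_apply continuous_const
  have hwcont : Continuous w := hwc1.add continuous_const
  have hi1 : IntervalIntegrable (fun t => fderiv ℝ (gradient Φ) (γ t) d) volume (0:ℝ) 1 :=
    hwc1.intervalIntegrable _ _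
  have hftc : ∫ t in (0:ℝ)..1, fderiv ℝ (gradient Φ) (γ t) d
      = gradient Φ u - gradient Φ v := by
    have hderiv : ∀ t ∈ Set.uIcc (0:ℝ) 1,
        HasDerivAt (fun s => gradient Φ (γ s)) (fderiv ℝ (gradient Φ) (γ t) d) t := by
      intro t _
      have hγd : HasDerivAt γ d t := by
        have h' : HasDerivAt (fun s : ℝ => s • d) ((1:ℝ) • d) t :=
          (hasDerivAt_id t).smul_const d
        have h'' := h'.const_add v
        rw [one_smul] at h''
        exact h''
      exact (hFd (γ t)).hasFDerivAt.comp_hasDerivAt t hγd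
    have hres := intervalIntegral.integral_eq_sub_of_hasDerivAt hderiv hi1
    rw [hres]
    have hγ1 : γ 1 = u := by simp [hγ, hd]
    have hγ0 : γ 0 = v := by simp [hγ]
    rw [hγ1, hγ0]
  have hG : ∫ t in (0:ℝ)..1, w t = (gradient Φ u - gradient Φ v) + ε • d := by
    rw [hw, intervalIntegral.integral_add hi1 intervalIntegrable_const, hftc,
      intervalIntegral.integral_const]
    simp
  set G := (gradient Φ u - gradient Φ v) + ε • d with hGdef
  have hpt : ∀ t ∈ Set.Icc (0:ℝ) 1,
      0 ≤ ⟪w t, d⟫ ∧ ‖w t‖ ^ 2 ≤ (Λ + ε) * ⟪w t, d⟫ := by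
    intro t ht
    have hwC := hγC t ht
    set M : EuclideanSpace ℝ (Fin p) →L[ℝ] EuclideanSpace ℝ (Fin p) :=
      fderiv ℝ (gradient Φ) (γ t) + ε • ContinuousLinearMap.id ℝ _ with hM
    have hMapp : ∀ x, M x = fderiv ℝ (gradient Φ) (γ t) x + ε • x := by
      intro x; simp [hM]
    have hMsym : ∀ x y, ⟪M x, y⟫ = ⟪M y, x⟫ := by
      intro x y
      simp only [hMapp, inner_add_left, real_inner_smul_left]
      rw [hsymH (γ t) x y, real_inner_comm x y]
    have hMpos : ∀ x, 0 ≤ ⟪M x, x⟫ := by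
      intro x
      have hh := (hHess (γ t) hwC x).1
      simp only [hMapp, inner_add_left, real_inner_smul_left, real_inner_self_eq_norm_sq]
      nlinarith
    have hMub : ∀ x, ⟪M x, x⟫ ≤ (Λ + ε) * ‖x‖ ^ 2 := by
      intro x
      have hh := (hHess (γ t) hwC x).2
      simp only [hMapp, inner_add_left, real_inner_smul_left, real_inner_self_eq_norm_sq]
      nlinarith
    have hwM : w t = M d := by rw [hw]; rw [hMapp d]
    constructor
    · rw [hwM]; exact hMpos d
    · rw [hwM]
      exact pointwise_cocoercive M (Λ + ε) (by linarith) hMsym hMpos hMub d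
  have hJ : ∫ t in (0:ℝ)..1, ⟪w t, d⟫ = ⟪G, d⟫ := by
    have hwint : IntervalIntegrable w volume 0 1 := hwcont.intervalIntegrable _ _
    have hcomm := (innerSL ℝ d).intervalIntegral_comp_comm hwint (a := 0) (b := 1)
    simp only [innerSL_apply_apply] at hcomm
    rw [show (fun t => ⟪w t, d⟫) = fun t => ⟪d, w t⟫ by funext t; rw [real_inner_comm]]
    rw [hcomm, hG]
    exact real_inner_comm G d
  have hJ0 : 0 ≤ ⟪G, d⟫ := by
    rw [← hJ]
    exact intervalIntegral.integral_nonneg (by norm_num) (fun t ht => (hpt t ht).1)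
  have hnorm : ‖G‖ ≤ ∫ t in (0:ℝ)..1, ‖w t‖ := by
    rw [← hG]
    exact intervalIntegral.norm_integral_le_integral_norm (by norm_num)
  have hjensen : (∫ t in (0:ℝ)..1, ‖w t‖) ^ 2 ≤ ∫ t in (0:ℝ)..1, ‖w t‖ ^ 2 :=
    sq_integral_le hwcont.norm
  have hmono : ∫ t in (0:ℝ)..1, ‖w t‖ ^ 2 ≤ ∫ t in (0:ℝ)..1, (Λ + ε) * ⟪w t, d⟫ := by
    apply intervalIntegral.integral_mono_on (by norm_num)
      ((hwcont.norm.pow 2).intervalIntegrable _ _)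
      ((continuous_const.mul (hwcont.inner continuous_const)).intervalIntegrable _ _)
    intro t ht
    exact (hpt t ht).2
  have hGsq : ‖G‖ ^ 2 ≤ (Λ + ε) * ⟪G, d⟫ := by
    have h1' : ‖G‖ ^ 2 ≤ (∫ t in (0:ℝ)..1, ‖w t‖) ^ 2 := by
      have hnn : 0 ≤ ∫ t in (0:ℝ)..1, ‖w t‖ :=
        intervalIntegral.integral_nonneg (by norm_num) (fun t _ => norm_nonneg _)
      nlinarith [norm_nonneg G]
    have h2' : ∫ t in (0:ℝ)..1, (Λ + ε) * ⟪w t, d⟫ = (Λ + ε) * ⟪G, d⟫ := by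
      rw [intervalIntegral.integral_const_mul, hJ]
    linarith
  have hgd : gradient Φ u - gradient Φ v = G - ε • d := by rw [hGdef]; abel
  have hI : ⟪gradient Φ u - gradient Φ v, d⟫ = ⟪G, d⟫ - ε * ‖d‖ ^ 2 := by
    rw [hgd, inner_sub_left, real_inner_smul_left, real_inner_self_eq_norm_sq]
  have hA : ‖gradient Φ u - gradient Φ v‖ ^ 2
      = ‖G‖ ^ 2 - 2 * ε * ⟪G, d⟫ + ε ^ 2 * ‖d‖ ^ 2 := by
    rw [hgd, norm_sub_sq_real, real_inner_smul_right, norm_smul, Real.norm_eq_abs,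
      abs_of_pos hε, mul_pow]
    ring
  rw [hI, hA, ge_iff_le]
  have hΛ0 : (0:ℝ) < Λ := lt_of_lt_of_le hε hΛ
  rw [div_mul_eq_mul_div, one_mul, sub_le_iff_le_add, div_le_iff₀ (by linarith)]
  have hB : (0:ℝ) ≤ ‖d‖ ^ 2 := sq_nonneg _
  nlinarith [mul_nonneg hJ0 hB, mul_nonneg (le_of_lt hε) hB, mul_nonneg hJ0 (le_of_lt hΛ0),
    mul_nonneg (mul_nonneg (le_of_lt hε) (le_of_lt hΛ0)) hB]
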